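/- Suppose m₁,m₂,n₁,n₂,p₁,p₂ are nonnegative integers, q₁,q₂,s₁,s₂ are positive integers, r₁ = r₂ = 0, and the matrices A₁ and A₂ commute. If p₁ > m₁ and p₁ > n₁, then p₂ > m₂ and p₂ > n₂. -/
import Mathlib


/-- Remark A.2 of the paper: the case `r₁ = r₂ = 0` with all `q_i, s_i` positive. If the
vertex matrices commute and `p₁` dominates `m₁` and `n₁`, then `p₂` dominates `m₂`, `n₂`. -/
theorem dumbbell_r_zero (m₁ m₂ n₁ n₂ p₁ p₂ q₁ q₂ s₁ s₂ : ℤ)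
    (hm₁ : 0 ≤ m₁) (hm₂ : 0 ≤ m₂) (hn₁ : 0 ≤ n₁) (hn₂ : 0 ≤ n₂)
    (hp₁ : 0 ≤ p₁) (hp₂ : 0 ≤ p₂)
    (hq₁ : 0 < q₁) (hq₂ : 0 < q₂) (hs₁ : 0 < s₁) (hs₂ : 0 < s₂)
    (hcomm : !![m₁, q₁, 0; 0, n₁, s₁; 0, 0, p₁] * !![m₂, q₂, 0; 0, n₂, s₂; 0, 0, p₂] =
      !![m₂, q₂, 0; 0, n₂, s₂; 0, 0, p₂] * !![m₁, q₁, 0; 0, n₁, s₁; 0, 0, p₁])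
    (h₁ : p₁ > m₁) (h₂ : p₁ > n₁) :
    p₂ > m₂ ∧ p₂ > n₂ := by
  have h01 : m₁ * q₂ + q₁ * n₂ = m₂ * q₁ + q₂ * n₁ := by
    have := congrFun (congrFun hcomm 0) 1
    simpa [Matrix.mul_apply, Fin.sum_univ_succ] using this
  have h02 : q₁ * s₂ = q₂ * s₁ := by
    have := congrFun (congrFun hcomm 0) 2
    simpa [Matrix.mul_apply, Fin.sum_univ_succ] using this
  have h12 : n₁ * s₂ + s₁ * p₂ = n₂ * s₁ + s₂ * p₁ := by
    have := congrFun (congrFun hcomm 1) 2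
    simpa [Matrix.mul_apply, Fin.sum_univ_succ] using this
  constructor
  · nlinarith [mul_pos hs₂ (sub_pos.2 h₁), mul_pos hq₁ (mul_pos hs₂ (sub_pos.2 h₁)),
      mul_pos hq₁ hs₁, mul_pos hq₂ hs₁]
  · nlinarith [mul_pos hs₂ (sub_pos.2 h₂)]
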